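/- Let E be a nonempty finite type, γ ∈ (0,1), ε = (1−γ)/2, Q* : E → ℝ, and let H : (E → ℝ) → (E → ℝ) satisfy ‖H Q − Q*‖_∞ ≤ γ·‖Q − Q*‖_∞ for every Q : E → ℝ. Let w : ℕ → E → ℝ and let Q : ℕ → E → ℝ satisfy, for every natural t ≥ 1 and every e, Q_{t+1}(e) = (1 − 1/t)·Q_t(e) + (1/t)·(H(Q_t)(e) + w_t(e)). Let D_0 ≥ 0 satisfy ‖Q_t − Q*‖_∞ ≤ D_0 for all t ≥ 1, let t_0 ≥ 1 be a natural number, and set t_k = 3^k · t_0 and D_k = (γ + ε)^k · D_0. For each k, define the restarted noise W^{(k)} by W^{(k)}_{t_k}(e) = 0 and W^{(k)}_{t+1}(e) = (1 − 1/t)·W^{(k)}_t(e) + (1/t)·w_t(e) for t ≥ t_k, and assume that for every k and every t ≥ t_{k+1} = 3·t_k and every e, |W^{(k)}_t(e)| ≤ (ε/3)·D_k. Then for every k and every t ≥ t_k = 3^k·t_0, ‖Q_t − Q*‖_∞ ≤ D_k. In particular, for any ε_1 > 0 and any natural N ≥ (2/(1−γ))·log(D_0/ε_1), ‖Q_t −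 Q*‖_∞ ≤ ε_1 for all t ≥ 3^N·t_0. -/

import Mathlib

/-- Restarted accumulated noise process: zero up to (and at) time `tk`, then follows
the linear-learning-rate noise recursion. -/
noncomputable def Wrec {E : Type*} (w : ℕ → E → ℝ) (tk : ℕ) : ℕ → E → ℝ
  | 0 => fun _ => 0
  | (t + 1) => fun e =>
      if tk ≤ t then (1 - 1 / (t : ℝ)) * Wrec w tk t e + (1 / (t : ℝ)) * w t e else 0

/-- Deterministic core of the finite-time convergence rate for synchronous Q-learning
with replay and linear learning rate `α_t = 1/t`: with stage times `t_k = 3^k t_0` and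
distance bounds `D_k = (γ+ε)^k D_0`, `ε = (1-γ)/2`, if every restarted accumulated
noise is bounded by `(ε/3)·D_k` from time `3^{k+1} t_0` onwards, then
`‖Q_t − Q*‖_∞ ≤ D_k` for all `t ≥ 3^k t_0`; in particular `‖Q_t − Q*‖_∞ ≤ ε_1` for all
`t ≥ 3^N t_0` once `N ≥ (2/(1-γ))·log(D_0/ε_1)`. -/
theorem stmt_11 {E : Type*} [Fintype E] [Nonempty E]
    (γ : ℝ) (hγ0 : 0 < γ) (hγ1 : γ < 1)
    (ε : ℝ) (hε : ε = (1 - γ) / 2)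
    (Qstar : E → ℝ) (H : (E → ℝ) → (E → ℝ))
    (hH : ∀ Q : E → ℝ, (⨆ e, |H Q e - Qstar e|) ≤ γ * ⨆ e, |Q e - Qstar e|)
    (w : ℕ → E → ℝ)
    (Q : ℕ → E → ℝ)
    (hQ : ∀ t, 1 ≤ t → ∀ e, Q (t + 1) e =
      (1 - 1 / (t : ℝ)) * Q t e + (1 / (t : ℝ)) * (H (Q t) e + w t e))
    (D0 : ℝ) (hD0 : 0 ≤ D0)
    (hbound : ∀ t, 1 ≤ t → (⨆ e, |Q t e - Qstar e|) ≤ D0)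
    (t0 : ℕ) (ht0 : 1 ≤ t0)
    (hW : ∀ (k : ℕ) (W : ℕ → E → ℝ),
      (∀ e, W (3 ^ k * t0) e = 0) →
      (∀ t, 3 ^ k * t0 ≤ t → ∀ e,
        W (t + 1) e = (1 - 1 / (t : ℝ)) * W t e + (1 / (t : ℝ)) * w t e) →
      ∀ t, 3 ^ (k + 1) * t0 ≤ t → ∀ e,
        |W t e| ≤ (ε / 3) * ((γ + ε) ^ k * D0)) :
    (∀ k : ℕ, ∀ t, 3 ^ k * t0 ≤ t →
      (⨆ e, |Q t e - Qstar e|) ≤ (γ + ε) ^ k * D0) ∧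
    (∀ ε1 : ℝ, 0 < ε1 → ∀ N : ℕ,
      (2 / (1 - γ)) * Real.log (D0 / ε1) ≤ (N : ℝ) →
      ∀ t, 3 ^ N * t0 ≤ t → (⨆ e, |Q t e - Qstar e|) ≤ ε1) := by
  have hγε0 : 0 < γ + ε := by rw [hε]; linarith
  have hγε1 : γ + ε < 1 := by rw [hε]; linarith
  have bdd : ∀ (f : E → ℝ), BddAbove (Set.range f) :=
    fun f => (Set.finite_range f).bddAbove
  have key : ∀ k : ℕ, ∀ t, 3 ^ k * t0 ≤ t →
      (⨆ e, |Q t e - Qstar e|) ≤ (γ + ε) ^ k * D0 := by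
    intro k
    induction k with
    | zero =>
      intro t ht
      simp only [pow_zero, one_mul] at ht ⊢
      exact hbound t (le_trans ht0 ht)
    | succ k IH =>
      set tk := 3 ^ k * t0 with htkdef
      have htkpos : 0 < tk := Nat.mul_pos (Nat.pow_pos (by norm_num)) ht0
      set Dk := (γ + ε) ^ k * D0 with hDkdef
      have hDk0 : 0 ≤ Dk := by positivity
      set W := Wrec w tk with hWdef
      have hW0 : ∀ e, W tk e = 0 := by
        obtain ⟨m, hm⟩ := Nat.exists_eq_succ_of_ne_zero (Nat.pos_iff_ne_zero.mp htkpos)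
        intro e
        rw [hWdef, hm]
        simp only [Wrec]
        rw [if_neg (by omega)]
      have hWr : ∀ t, tk ≤ t → ∀ e,
          W (t + 1) e = (1 - 1 / (t : ℝ)) * W t e + (1 / (t : ℝ)) * w t e := by
        intro t ht e
        rw [hWdef]
        simp only [Wrec, if_pos ht]
      have hWb := hW k W hW0 hWr
      -- inner induction: bound the noise-free deviation
      have claim : ∀ t, tk ≤ t → ∀ e,
          |Q t e - Qstar e - W t e| ≤ γ * Dk + (1 - γ) * Dk * ((tk : ℝ) / (t : ℝ)) := by
        intro t ht
        induction t, ht using Nat.le_induction with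
        | base =>
          intro e
          rw [hW0 e, sub_zero]
          have hb : |Q tk e - Qstar e| ≤ Dk :=
            le_trans (le_ciSup (f := fun e => |Q tk e - Qstar e|) (bdd _) e) (IH tk le_rfl)
          have h1 : ((tk : ℝ)) / (tk : ℝ) = 1 := by
            apply div_self
            exact_mod_cast Nat.pos_iff_ne_zero.mp htkpos
          rw [h1]
          linarith
        | succ t ht IHt =>
          intro e
          have ht1 : (1 : ℝ) ≤ (t : ℝ) := by exact_mod_cast le_trans htkpos ht
          have htpos : (0 : ℝ) < (t : ℝ) := by linarith
          have hinv : (0 : ℝ) ≤ 1 / (t : ℝ) := by positivity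
          have hinv1 : (1 : ℝ) / (t : ℝ) ≤ 1 := by
            rw [div_le_one htpos]; exact ht1
          have hrec : Q (t + 1) e - Qstar e - W (t + 1) e =
              (1 - 1 / (t : ℝ)) * (Q t e - Qstar e - W t e)
                + (1 / (t : ℝ)) * (H (Q t) e - Qstar e) := by
            rw [hQ t (by omega) e, hWr t ht e]; ring
          have hH1 : |H (Q t) e - Qstar e| ≤ γ * Dk :=
            le_trans (le_ciSup (f := fun e => |H (Q t) e - Qstar e|) (bdd _) e)
              (le_trans (hH (Q t)) (mul_le_mul_of_nonneg_left (IH t ht) hγ0.le))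
          have hfrac : (1 - 1 / (t : ℝ)) * ((tk : ℝ) / (t : ℝ)) ≤ (tk : ℝ) / ((t : ℝ) + 1) := by
            have heq : (1 - 1 / (t : ℝ)) * ((tk : ℝ) / (t : ℝ))
                = (tk : ℝ) * ((t : ℝ) - 1) / ((t : ℝ) * (t : ℝ)) := by
              field_simp
            rw [heq, div_le_div_iff₀ (by positivity) (by positivity)]
            have htknn : (0 : ℝ) ≤ (tk : ℝ) := Nat.cast_nonneg tk
            nlinarith
          have hcnn : (0 : ℝ) ≤ (1 - γ) * Dk := by nlinarith
          have step1 : |Q (t + 1) e - Qstar e - W (t + 1) e| ≤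
              (1 - 1 / (t : ℝ)) * (γ * Dk + (1 - γ) * Dk * ((tk : ℝ) / (t : ℝ)))
                + (1 / (t : ℝ)) * (γ * Dk) := by
            rw [hrec]
            calc |(1 - 1 / (t : ℝ)) * (Q t e - Qstar e - W t e)
                  + (1 / (t : ℝ)) * (H (Q t) e - Qstar e)|
                ≤ |(1 - 1 / (t : ℝ)) * (Q t e - Qstar e - W t e)|
                  + |(1 / (t : ℝ)) * (H (Q t) e - Qstar e)| := abs_add_le _ _
              _ = (1 - 1 / (t : ℝ)) * |Q t e - Qstar e - W t e|
                  + (1 / (t : ℝ)) * |H (Q t) e - Qstar e| := by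
                  rw [abs_mul, abs_mul, abs_of_nonneg (by linarith), abs_of_nonneg hinv]
              _ ≤ _ := by
                  apply add_le_add
                  · exact mul_le_mul_of_nonneg_left (IHt e) (by linarith)
                  · exact mul_le_mul_of_nonneg_left hH1 hinv
          have step2 : (1 - 1 / (t : ℝ)) * (γ * Dk + (1 - γ) * Dk * ((tk : ℝ) / (t : ℝ)))
                + (1 / (t : ℝ)) * (γ * Dk)
              = γ * Dk + (1 - γ) * Dk * ((1 - 1 / (t : ℝ)) * ((tk : ℝ) / (t : ℝ))) := by
            ring
          have step3 : (1 - γ) * Dk * ((1 - 1 / (t : ℝ)) * ((tk : ℝ) / (t : ℝ)))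
              ≤ (1 - γ) * Dk * ((tk : ℝ) / ((t : ℝ) + 1)) :=
            mul_le_mul_of_nonneg_left hfrac hcnn
          have : |Q (t + 1) e - Qstar e - W (t + 1) e|
              ≤ γ * Dk + (1 - γ) * Dk * ((tk : ℝ) / ((t : ℝ) + 1)) := by
            rw [step2] at step1; linarith
          convert this using 4
          push_cast; ring
      -- conclude the stage
      intro t ht
      have ht3 : 3 * tk ≤ t := by
        have h : 3 ^ (k + 1) * t0 = 3 * tk := by rw [htkdef, pow_succ]; ring
        omega
      have httk : tk ≤ t := by omega
      have htpos : (0 : ℝ) < (t : ℝ) := by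
        have : 0 < t := lt_of_lt_of_le htkpos httk
        exact_mod_cast this
      apply ciSup_le
      intro e
      have h1 := claim t httk e
      have h2 := hWb t (by
        have h : 3 ^ (k + 1) * t0 = 3 * tk := by rw [htkdef, pow_succ]; ring
        omega) e
      have habs : |Q t e - Qstar e| ≤ |Q t e - Qstar e - W t e| + |W t e| := by
        have h := abs_add_le (Q t e - Qstar e - W t e) (W t e)
        simpa using h
      have hfrac2 : (tk : ℝ) / (t : ℝ) ≤ 1 / 3 := by
        rw [div_le_div_iff₀ htpos (by norm_num)]
        have : (3 : ℝ) * (tk : ℝ) ≤ (t : ℝ) := by exact_mod_cast ht3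
        linarith
      have hcnn : (0 : ℝ) ≤ (1 - γ) * Dk := by nlinarith
      have h3 : (1 - γ) * Dk * ((tk : ℝ) / (t : ℝ)) ≤ (1 - γ) * Dk * (1 / 3) :=
        mul_le_mul_of_nonneg_left hfrac2 hcnn
      have hgoal : (γ + ε) ^ (k + 1) * D0 = (γ + ε) * Dk := by
        rw [hDkdef, pow_succ]; ring
      rw [hgoal]
      have hεval : ε = (1 - γ) / 2 := hε
      nlinarith [h1, h2, habs, h3]
  refine ⟨key, ?_⟩
  intro ε1 hε1 N hN t ht
  rcases eq_or_lt_of_le hD0 with hD | hD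
  · refine le_trans (key N t ht) ?_
    rw [← hD, mul_zero]; linarith
  · refine le_trans (key N t ht) ?_
    have hlog : Real.log (γ + ε) ≤ -((1 - γ) / 2) := by
      have h := Real.log_le_sub_one_of_pos hγε0
      rw [hε] at h ⊢; linarith
    have hN' : Real.log (D0 / ε1) ≤ (N : ℝ) * ((1 - γ) / 2) := by
      have h2 : (0 : ℝ) < (1 - γ) / 2 := by linarith
      have h3 := mul_le_mul_of_nonneg_right hN h2.le
      have h4 : (2 / (1 - γ)) * Real.log (D0 / ε1) * ((1 - γ) / 2)
          = Real.log (D0 / ε1) := by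
        have hne : (1 - γ) ≠ 0 := by linarith
        field_simp
      rw [h4] at h3; exact h3
    have hl : Real.log ((γ + ε) ^ N) ≤ Real.log (ε1 / D0) := by
      rw [Real.log_pow]
      have hinv : ε1 / D0 = (D0 / ε1)⁻¹ := by
        rw [inv_div]
      rw [hinv, Real.log_inv]
      calc (N : ℝ) * Real.log (γ + ε)
          ≤ (N : ℝ) * (-((1 - γ) / 2)) :=
            mul_le_mul_of_nonneg_left hlog (Nat.cast_nonneg N)
        _ = -((N : ℝ) * ((1 - γ) / 2)) := by ring
        _ ≤ -Real.log (D0 / ε1) := by linarith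
    have hpow : (γ + ε) ^ N ≤ ε1 / D0 := by
      have h5 := Real.exp_le_exp.mpr hl
      rwa [Real.exp_log (by positivity), Real.exp_log (by positivity)] at h5
    calc (γ + ε) ^ N * D0 ≤ (ε1 / D0) * D0 :=
          mul_le_mul_of_nonneg_right hpow hD0
      _ = ε1 := by field_simp
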